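/- arXiv:2304.09743 — 2 statements merged into one kernel-verified Lean document; each statement's English description precedes it below -/
import Mathlib

section
/- Let U be a finite set, let z be a nondegenerate nonnegative weight vector, let S ⊆ U be nonempty and T ⊆ U. Then: (i) if T ⊇ S, then ∂f(S)/∂z_T = 1; (ii) if T ∩ S = ∅, then ∂f(S)/∂z_T = 0; (iii) f(S) ≥ Σ_{E ⊆ U : E ⊇ S} z_E. -/
open Finset

variable {α : Type*} [Fintype α] [DecidableEq α]

/-- `E` crosses `S` if both `S ∩ E` and `S \ E` are nonempty. -/
def Crosses (E S : Finset α) : Prop := (S ∩ E).Nonempty ∧ (S \ E).Nonempty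

instance (E S : Finset α) : Decidable (Crosses E S) := by unfold Crosses; infer_instance

/-- The family of subsets of the ground set crossing `S`. -/
def crossers (S : Finset α) : Finset (Finset α) := univ.filter (fun E => Crosses E S)

/-- `ℓ(p)`: total weight of the sets containing `p`. -/
def ell (z : Finset α → ℝ) (p : α) : ℝ := ∑ E ∈ univ.filter (fun E => p ∈ E), z E

lemma card_sdiff_lt_of_mem_crossers {E S : Finset α} (h : E ∈ crossers S) :
    (S \ E).card < S.card := by
  rw [crossers, mem_filter] at h
  unfold Crosses at h
  obtain ⟨-, ⟨x, hx⟩, -⟩ := h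
  refine card_lt_card ((ssubset_iff_of_subset sdiff_subset).mpr ?_)
  exact ⟨x, (mem_inter.mp hx).1, fun hmem => (mem_sdiff.mp hmem).2 (mem_inter.mp hx).2⟩

/-- The function `f(S)` from the Closest Point Process. -/
noncomputable def fval (z : Finset α → ℝ) (S : Finset α) : ℝ :=
  if S.card ≤ 1 then ∑ p ∈ S, ell z p
  else if 0 < ∑ E ∈ crossers S, z E then
    (∑ E ∈ (crossers S).attach, z E.1 * fval z (S \ E.1)) / (∑ E ∈ crossers S, z E)
  else 0
termination_by S.card
decreasing_by exact card_sdiff_lt_of_mem_crossers E.2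

/-- A weight vector is nondegenerate if every `S` with `|S| ≥ 2` has positive crossing weight. -/
def Nondeg (z : Finset α → ℝ) : Prop :=
  ∀ S : Finset α, 2 ≤ S.card → 0 < ∑ E ∈ crossers S, z E

/-- The partial derivative `∂f(S)/∂z_T`. -/
noncomputable def pderivf (S T : Finset α) (z : Finset α → ℝ) : ℝ :=
  fderiv ℝ (fun w : Finset α → ℝ => fval w S) z (Pi.single T 1)

/-- The pseudo-derivative `∂̂f(S)/∂̂z_T`. -/
noncomputable def pdhat (z : Finset α → ℝ) (S T : Finset α) : ℝ :=
  if S ⊆ T then 1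
  else if S ∩ T = ∅ then 0
  else (∑ E ∈ (crossers S).attach, z E.1 * pdhat z (S \ E.1) T
        + fval z (S \ T) - ∑ E ∈ univ.filter (fun E => S ⊆ E), z E)
       / (∑ E ∈ crossers S, z E)
termination_by S.card
decreasing_by exact card_sdiff_lt_of_mem_crossers E.2

/-- The `m`-th harmonic number. -/
noncomputable def harm (m : ℕ) : ℝ := ∑ j ∈ Finset.range m, 1 / ((j : ℝ) + 1)

section Aux

variable (z : Finset α → ℝ)

lemma fval_of_card_le_one {S : Finset α} (h : S.card ≤ 1) :
    fval z S = ∑ p ∈ S, ell z p := by rw [fval]; simp [h]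

lemma fval_of_two_le {S : Finset α} (h : 2 ≤ S.card)
    (hpos : 0 < ∑ E ∈ crossers S, z E) :
    fval z S = (∑ E ∈ (crossers S).attach, z E.1 * fval z (S \ E.1)) /
      (∑ E ∈ crossers S, z E) := by
  rw [fval]
  have : ¬ S.card ≤ 1 := by omega
  simp [this, hpos]

lemma sdiff_nonempty_of_mem_crossers {E S : Finset α} (h : E ∈ crossers S) :
    (S \ E).Nonempty := by
  rw [crossers, mem_filter] at h
  simp only [Crosses] at h
  exact h.2.2

lemma not_mem_crossers_of_subset {S T : Finset α} (h : S ⊆ T) : T ∉ crossers S := by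
  rw [crossers, mem_filter]
  simp only [Crosses, not_and, mem_univ, true_implies]
  rintro - ⟨x, hx⟩
  exact (mem_sdiff.mp hx).2 (h (mem_sdiff.mp hx).1)

lemma not_mem_crossers_of_disjoint {S T : Finset α} (h : T ∩ S = ∅) : T ∉ crossers S := by
  rw [crossers, mem_filter]
  simp only [Crosses, not_and, mem_univ, true_and]
  rintro ⟨x, hx⟩ -
  have : x ∈ T ∩ S := mem_inter.mpr ⟨(mem_inter.mp hx).2, (mem_inter.mp hx).1⟩
  simp [h] at this

lemma sdiff_ssubset_of_mem_crossers {E S : Finset α} (h : E ∈ crossers S) :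
    S \ E ⊂ S := by
  rw [crossers, mem_filter] at h
  simp only [Crosses] at h
  obtain ⟨-, ⟨x, hx⟩, -⟩ := h
  exact (ssubset_iff_of_subset sdiff_subset).mpr
    ⟨x, (mem_inter.mp hx).1, fun hm => (mem_sdiff.mp hm).2 (mem_inter.mp hx).2⟩

lemma fval_ge_sum (hz : ∀ E : Finset α, 0 ≤ z E) (hnd : Nondeg z) :
    ∀ S : Finset α, S.Nonempty →
      (∑ E ∈ univ.filter (fun E => S ⊆ E), z E) ≤ fval z S := by
  intro S
  induction S using Finset.strongInduction with
  | _ S ih =>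
    intro hS
    by_cases h1 : S.card ≤ 1
    · rw [fval_of_card_le_one z h1]
      obtain ⟨p, rfl⟩ := card_eq_one.mp (le_antisymm h1 hS.card_pos)
      rw [sum_singleton]
      apply sum_le_sum_of_subset_of_nonneg
      · intro E hE
        simp only [mem_filter, mem_univ, true_and] at hE ⊢
        exact hE (mem_singleton_self p)
      · exact fun E _ _ => hz E
    · push_neg at h1
      have h2 : 2 ≤ S.card := h1
      have hpos := hnd S h2
      rw [fval_of_two_le z h2 hpos, le_div_iff₀ hpos]
      set c : ℝ := ∑ E ∈ univ.filter (fun E => S ⊆ E), z E with hc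
      calc c * ∑ E ∈ crossers S, z E = ∑ E ∈ crossers S, z E * c := by
            rw [mul_sum]; exact sum_congr rfl fun E _ => mul_comm _ _
        _ = ∑ E ∈ (crossers S).attach, z E.1 * c := (sum_attach _ _).symm
        _ ≤ ∑ E ∈ (crossers S).attach, z E.1 * fval z (S \ E.1) := by
            apply sum_le_sum
            intro E _
            apply mul_le_mul_of_nonneg_left _ (hz E.1)
            have hsub : S \ E.1 ⊂ S := sdiff_ssubset_of_mem_crossers E.2
            calc c ≤ ∑ F ∈ univ.filter (fun F => S \ E.1 ⊆ F), z F := by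
                  apply sum_le_sum_of_subset_of_nonneg
                  · intro F hF
                    simp only [mem_filter, mem_univ, true_and] at hF ⊢
                    exact (sdiff_subset).trans hF
                  · exact fun F _ _ => hz F
              _ ≤ fval z (S \ E.1) := ih _ hsub (sdiff_nonempty_of_mem_crossers E.2)

lemma fval_deriv (hnd : Nondeg z) :
    ∀ S : Finset α, S.Nonempty →
      ∃ L : (Finset α → ℝ) →L[ℝ] ℝ, HasFDerivAt (fun w => fval w S) L z ∧
        (∀ T : Finset α, S ⊆ T → L (Pi.single T 1) = 1) ∧
        (∀ T : Finset α, T ∩ S = ∅ → L (Pi.single T 1) = 0) := by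
  intro S
  induction S using Finset.strongInduction with
  | _ S ih =>
    intro hS
    by_cases h1 : S.card ≤ 1
    · obtain ⟨p, rfl⟩ := card_eq_one.mp (le_antisymm h1 hS.card_pos)
      refine ⟨∑ E ∈ univ.filter (fun E => p ∈ E), ContinuousLinearMap.proj E, ?_, ?_, ?_⟩
      · have heq : (fun w : Finset α → ℝ => fval w {p}) =
            fun w => ∑ E ∈ univ.filter (fun E => p ∈ E), w E := by
          funext w
          rw [fval_of_card_le_one w (by simp), sum_singleton]
          rfl
        rw [heq]
        exact HasFDerivAt.fun_sum fun E _ =>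
          (ContinuousLinearMap.proj E : (Finset α → ℝ) →L[ℝ] ℝ).hasFDerivAt
      · intro T hT
        rw [ContinuousLinearMap.sum_apply]
        simp only [ContinuousLinearMap.proj_apply, Pi.single_apply]
        rw [sum_ite_eq' _ T (fun _ => (1:ℝ))]
        simp [hT (mem_singleton_self p)]
      · intro T hT
        rw [ContinuousLinearMap.sum_apply]
        simp only [ContinuousLinearMap.proj_apply, Pi.single_apply]
        rw [sum_ite_eq' _ T (fun _ => (1:ℝ))]
        have : p ∉ T := fun hp => by
          have : p ∈ T ∩ {p} := mem_inter.mpr ⟨hp, mem_singleton_self p⟩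
          simp [hT] at this
        simp [this]
    · push_neg at h1
      have h2 : 2 ≤ S.card := h1
      have hpos := hnd S h2
      have H : ∀ E : {x // x ∈ crossers S},
          ∃ L : (Finset α → ℝ) →L[ℝ] ℝ, HasFDerivAt (fun w => fval w (S \ E.1)) L z ∧
            (∀ T : Finset α, S \ E.1 ⊆ T → L (Pi.single T 1) = 1) ∧
            (∀ T : Finset α, T ∩ (S \ E.1) = ∅ → L (Pi.single T 1) = 0) := by
        intro E
        exact ih _ (sdiff_ssubset_of_mem_crossers E.2) (sdiff_nonempty_of_mem_crossers E.2)
      choose L hL hL1 hL0 using H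
      set D : (Finset α → ℝ) →L[ℝ] ℝ := ∑ E ∈ crossers S, ContinuousLinearMap.proj E with hD
      set N' : (Finset α → ℝ) →L[ℝ] ℝ := ∑ E ∈ (crossers S).attach,
        (z E.1 • L E + fval z (S \ E.1) • ContinuousLinearMap.proj E.1) with hN'
      have hdenom : ∀ w : Finset α → ℝ, (∑ E ∈ crossers S, w E) = D w := by
        intro w; rw [hD, ContinuousLinearMap.sum_apply]; rfl
      have hDz : D z = ∑ E ∈ crossers S, z E := (hdenom z).symm
      have hNder : HasFDerivAt (fun w => ∑ E ∈ (crossers S).attach, w E.1 * fval w (S \ E.1)) N' z :=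
        HasFDerivAt.fun_sum fun E _ =>
          ((ContinuousLinearMap.proj E.1 : (Finset α → ℝ) →L[ℝ] ℝ).hasFDerivAt).mul (hL E)
      have hDder : HasFDerivAt (fun w : Finset α → ℝ => ∑ E ∈ crossers S, w E) D z :=
        HasFDerivAt.fun_sum fun E _ =>
          (ContinuousLinearMap.proj E : (Finset α → ℝ) →L[ℝ] ℝ).hasFDerivAt
      set Nz : ℝ := ∑ E ∈ (crossers S).attach, z E.1 * fval z (S \ E.1) with hNz
      set Dz : ℝ := ∑ E ∈ crossers S, z E with hDzdef
      have hDne : Dz ≠ 0 := ne_of_gt hpos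
      have hInv : HasFDerivAt (fun w : Finset α → ℝ => (∑ E ∈ crossers S, w E)⁻¹)
          ((-(Dz ^ 2)⁻¹) • D) z := by
        have := (hasDerivAt_inv hDne).comp_hasFDerivAt z hDder
        exact this
      have hdiv := hNder.mul hInv
      refine ⟨Nz • ((-(Dz ^ 2)⁻¹) • D) + Dz⁻¹ • N', ?_, ?_, ?_⟩
      · apply hdiv.congr_of_eventuallyEq
        have hopen : IsOpen {w : Finset α → ℝ | 0 < ∑ E ∈ crossers S, w E} := by
          have : Continuous fun w : Finset α → ℝ => ∑ E ∈ crossers S, w E :=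
            continuous_finset_sum _ fun E _ => continuous_apply E
          exact isOpen_lt continuous_const this
        filter_upwards [hopen.mem_nhds hpos] with w hw
        rw [fval_of_two_le w h2 hw, div_eq_mul_inv]; rfl
      · intro T hT
        have hTnot : T ∉ crossers S := not_mem_crossers_of_subset hT
        have hDT : D (Pi.single T 1) = 0 := by
          rw [hD, ContinuousLinearMap.sum_apply]
          simp only [ContinuousLinearMap.proj_apply, Pi.single_apply]
          rw [sum_ite_eq' _ T (fun _ => (1:ℝ))]
          simp [hTnot]
        have hNT : N' (Pi.single T 1) = Dz := by
          rw [hN', ContinuousLinearMap.sum_apply]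
          have : ∀ E ∈ (crossers S).attach,
              ((z E.1 • L E + fval z (S \ E.1) • ContinuousLinearMap.proj E.1 :
                (Finset α → ℝ) →L[ℝ] ℝ)) (Pi.single T 1) = z E.1 := by
            intro E _
            rw [ContinuousLinearMap.add_apply, ContinuousLinearMap.smul_apply,
              ContinuousLinearMap.smul_apply, ContinuousLinearMap.proj_apply]
            have hET : E.1 ≠ T := fun h => hTnot (h ▸ E.2)
            rw [hL1 E T (sdiff_subset.trans hT), Pi.single_apply]
            simp [hET]
          rw [sum_congr rfl this, hDzdef]
          exact sum_attach _ _
        rw [ContinuousLinearMap.add_apply, ContinuousLinearMap.smul_apply,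
          ContinuousLinearMap.smul_apply, ContinuousLinearMap.smul_apply, hDT, hNT]
        field_simp
        simp [hDne]
      · intro T hT
        have hTnot : T ∉ crossers S := not_mem_crossers_of_disjoint hT
        have hDT : D (Pi.single T 1) = 0 := by
          rw [hD, ContinuousLinearMap.sum_apply]
          simp only [ContinuousLinearMap.proj_apply, Pi.single_apply]
          rw [sum_ite_eq' _ T (fun _ => (1:ℝ))]
          simp [hTnot]
        have hNT : N' (Pi.single T 1) = 0 := by
          rw [hN', ContinuousLinearMap.sum_apply]
          apply sum_eq_zero
          intro E _
          rw [ContinuousLinearMap.add_apply, ContinuousLinearMap.smul_apply,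
            ContinuousLinearMap.smul_apply, ContinuousLinearMap.proj_apply]
          have hET : E.1 ≠ T := fun h => hTnot (h ▸ E.2)
          have : T ∩ (S \ E.1) = ∅ := by
            rw [eq_empty_iff_forall_notMem]
            intro x hx
            have hm : x ∈ T ∩ S :=
              mem_inter.mpr ⟨(mem_inter.mp hx).1, (mem_sdiff.mp (mem_inter.mp hx).2).1⟩
            simp [hT] at hm
          rw [hL0 E T this, Pi.single_apply]
          simp [hET]
        rw [ContinuousLinearMap.add_apply, ContinuousLinearMap.smul_apply,
          ContinuousLinearMap.smul_apply, ContinuousLinearMap.smul_apply, hDT, hNT]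
        simp

end Aux

/-- basic properties of the partial derivatives of `f`. -/
theorem stmt6 {α : Type*} [Fintype α] [DecidableEq α]
    (z : Finset α → ℝ) (hz : ∀ E : Finset α, 0 ≤ z E) (hnd : Nondeg z)
    (S T : Finset α) (hS : S.Nonempty) :
    (S ⊆ T → pderivf S T z = 1) ∧
    (T ∩ S = ∅ → pderivf S T z = 0) ∧
    (∑ E ∈ Finset.univ.filter (fun E => S ⊆ E), z E) ≤ fval z S := by
  obtain ⟨L, hL, hL1, hL0⟩ := fval_deriv z hnd S hS
  have hfd : fderiv ℝ (fun w : Finset α → ℝ => fval w S) z = L := hL.fderiv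
  refine ⟨fun h => ?_, fun h => ?_, fval_ge_sum z hz hnd S hS⟩
  · rw [pderivf, hfd]; exact hL1 T h
  · rw [pderivf, hfd]; exact hL0 T h
end

section
/- Let U be a finite set, let z be a nondegenerate nonnegative weight vector, let S ⊆ U be nonempty and T ⊆ U be nonempty, and suppose all points in S ∖ T have the same norm, i.e., ℓ(p) = ℓ(q) for all p, q ∈ S ∖ T. Then ∂̂f(S)/∂̂z_T ≤ 1 + H_{|S∖T|}. -/
open Finset

variable {α : Type*} [Fintype α] [DecidableEq α]

lemma harm_nonneg (m : ℕ) : 0 ≤ harm m := by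
  apply Finset.sum_nonneg; intro j _; positivity

lemma harm_le {m k : ℕ} (hk : k ≤ m) (hm : 0 < m) :
    harm (m - k) + (k : ℝ) / m ≤ harm m := by
  have h1 : harm m - harm (m - k) = ∑ j ∈ Finset.Ico (m - k) m, 1 / ((j : ℝ) + 1) := by
    rw [harm, harm, eq_comm]
    exact Finset.sum_Ico_eq_sub _ (Nat.sub_le m k)
  have h2 : (k : ℝ) / m ≤ ∑ j ∈ Finset.Ico (m - k) m, 1 / ((j : ℝ) + 1) := by
    have h3 : ∀ j ∈ Finset.Ico (m - k) m, (1 : ℝ) / m ≤ 1 / ((j : ℝ) + 1) := by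
      intro j hj
      have hjm : j < m := (Finset.mem_Ico.mp hj).2
      apply one_div_le_one_div_of_le
      · positivity
      · exact_mod_cast hjm
    calc (k : ℝ) / m = (Finset.Ico (m - k) m).card * (1 / (m : ℝ)) := by
          rw [Nat.card_Ico]
          have : m - (m - k) = k := by omega
          rw [this]; ring
      _ = ∑ _j ∈ Finset.Ico (m - k) m, (1 : ℝ) / m := by
          rw [Finset.sum_const, nsmul_eq_mul]
      _ ≤ _ := Finset.sum_le_sum h3
  linarith

lemma mem_crossers {E S : Finset α} : E ∈ crossers S ↔ Crosses E S := by
  simp [crossers]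

lemma fconst (z : Finset α → ℝ) (hnd : Nondeg z) (L : ℝ) :
    ∀ n (S : Finset α), S.card ≤ n → S.Nonempty → (∀ p ∈ S, ell z p = L) →
      fval z S = L := by
  intro n
  induction n with
  | zero =>
    intro S h hS _
    rw [Nat.le_zero, card_eq_zero] at h
    simp [h] at hS
  | succ n ih =>
    intro S hcard hS hL
    rw [fval]
    by_cases h1 : S.card ≤ 1
    · have hc1 : S.card = 1 := le_antisymm h1 (card_pos.mpr hS)
      obtain ⟨p, rfl⟩ := card_eq_one.mp hc1
      rw [if_pos h1, sum_singleton]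
      exact hL p (mem_singleton_self p)
    · have h2 : 2 ≤ S.card := by omega
      have hW := hnd S h2
      rw [if_neg h1, if_pos hW]
      have heach : ∀ E ∈ (crossers S).attach, z E.1 * fval z (S \ E.1) = z E.1 * L := by
        intro E _
        congr 1
        have hE := E.2
        have hcross : Crosses E.1 S := mem_crossers.mp hE
        have hlt := card_sdiff_lt_of_mem_crossers hE
        exact ih (S \ E.1) (by omega) hcross.2 (fun p hp => hL p (mem_sdiff.mp hp).1)
      rw [Finset.sum_congr rfl heach]
      have : ∑ E ∈ (crossers S).attach, z E.1 * L = (∑ E ∈ crossers S, z E) * L := by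
        rw [← Finset.sum_mul]
        congr 1
        exact Finset.sum_attach _ _
      rw [this]
      exact mul_div_cancel_left₀ L hW.ne'

lemma ell_decomp (z : Finset α → ℝ) (S : Finset α) (p : α) (hp : p ∈ S) :
    ell z p = (∑ E ∈ crossers S, if p ∈ E then z E else 0)
      + ∑ E ∈ univ.filter (fun E => S ⊆ E), z E := by
  rw [ell, Finset.sum_filter, crossers, Finset.sum_filter, Finset.sum_filter,
    ← Finset.sum_add_distrib]
  apply Finset.sum_congr rfl
  intro E _
  by_cases hSE : S ⊆ E
  · have hpE : p ∈ E := hSE hp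
    have hnc : ¬ Crosses E S := by
      rintro ⟨-, x, hx⟩
      exact (mem_sdiff.mp hx).2 (hSE (mem_sdiff.mp hx).1)
    simp [hpE, hnc, hSE]
  · have hc : p ∈ E → Crosses E S := by
      intro hpE
      exact ⟨⟨p, mem_inter.mpr ⟨hp, hpE⟩⟩, sdiff_nonempty.mpr hSE⟩
    by_cases hpE : p ∈ E
    · simp [hpE, hc hpE, hSE]
    · simp [hpE, hSE]

lemma main_bound (z : Finset α → ℝ) (hz : ∀ E : Finset α, 0 ≤ z E) (hnd : Nondeg z)
    (T : Finset α) :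
    ∀ n (S : Finset α), S.card ≤ n →
      (∀ p ∈ S \ T, ∀ q ∈ S \ T, ell z p = ell z q) →
      pdhat z S T ≤ 1 + harm (S \ T).card := by
  intro n
  induction n with
  | zero =>
    intro S h _
    rw [Nat.le_zero, card_eq_zero] at h
    subst h
    rw [pdhat, if_pos (empty_subset T)]
    linarith [harm_nonneg (∅ \ T : Finset α).card]
  | succ n ih =>
    intro S hcard huni
    rw [pdhat]
    by_cases h1 : S ⊆ T
    · rw [if_pos h1]; linarith [harm_nonneg (S \ T).card]
    rw [if_neg h1]
    by_cases h2 : S ∩ T = ∅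
    · rw [if_pos h2]; linarith [harm_nonneg (S \ T).card]
    rw [if_neg h2]
    -- setup
    have hST : (S \ T).Nonempty := sdiff_nonempty.mpr h1
    obtain ⟨y, hy⟩ := hST
    obtain ⟨x, hx⟩ := nonempty_iff_ne_empty.mpr h2
    have hxy : x ≠ y := by
      intro h
      exact (mem_sdiff.mp hy).2 (h ▸ (mem_inter.mp hx).2)
    have h2card : 2 ≤ S.card :=
      one_lt_card.mpr ⟨x, (mem_inter.mp hx).1, y, (mem_sdiff.mp hy).1, hxy⟩
    set m : ℕ := (S \ T).card with hmdef
    have hm : 0 < m := card_pos.mpr ⟨y, hy⟩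
    have hmR : (0 : ℝ) < m := by exact_mod_cast hm
    set W : ℝ := ∑ E ∈ crossers S, z E with hWdef
    have hW : 0 < W := hnd S h2card
    set B : ℝ := ∑ E ∈ univ.filter (fun E => S ⊆ E), z E with hBdef
    set L : ℝ := ell z y with hLdef
    -- f(S\T) = L
    have hfL : fval z (S \ T) = L :=
      fconst z hnd L (S \ T).card (S \ T) le_rfl ⟨y, hy⟩ (fun p hp => huni p hp y hy)
    -- key identity: m * L = Σ k_E z_E + m * B
    have hkey : (m : ℝ) * L = (∑ E ∈ crossers S, (((S \ T) ∩ E).card : ℝ) * z E) + m * B := by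
      have h3 : ∑ p ∈ S \ T, ell z p = (m : ℝ) * L := by
        rw [Finset.sum_congr rfl (fun p hp => huni p hp y hy), Finset.sum_const,
          nsmul_eq_mul]
      rw [← h3]
      have h4 : ∀ p ∈ S \ T, ell z p
          = (∑ E ∈ crossers S, if p ∈ E then z E else 0) + B :=
        fun p hp => ell_decomp z S p (mem_sdiff.mp hp).1
      rw [Finset.sum_congr rfl h4, Finset.sum_add_distrib, Finset.sum_const, nsmul_eq_mul]
      congr 1
      rw [Finset.sum_comm]
      apply Finset.sum_congr rfl
      intro E _
      rw [← Finset.sum_filter, Finset.filter_mem_eq_inter, Finset.sum_const, nsmul_eq_mul]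
    -- per-term bound
    have hA : ∑ E ∈ (crossers S).attach, z E.1 * pdhat z (S \ E.1) T
        ≤ ∑ E ∈ crossers S, z E * ((1 + harm m) - (((S \ T) ∩ E).card : ℝ) / (m : ℝ)) := by
      have hstep : ∀ E ∈ (crossers S).attach, z E.1 * pdhat z (S \ E.1) T
          ≤ z E.1 * ((1 + harm m) - (((S \ T) ∩ E.1).card : ℝ) / (m : ℝ)) := by
        intro E _
        refine mul_le_mul_of_nonneg_left ?_ (hz E.1)
        have hE := E.2
        have hlt := card_sdiff_lt_of_mem_crossers hE
        have hsub : (S \ E.1) \ T = (S \ T) \ E.1 := by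
          ext a; simp only [mem_sdiff]; tauto
        have hk : ((S \ T) ∩ E.1).card ≤ m := card_le_card inter_subset_left
        have hcc : ((S \ E.1) \ T).card = m - ((S \ T) ∩ E.1).card := by
          rw [hsub]
          have := card_sdiff_add_card_inter (S \ T) E.1
          omega
        have ihE : pdhat z (S \ E.1) T ≤ 1 + harm (((S \ E.1) \ T).card) := by
          apply ih (S \ E.1) (by omega)
          intro p hp q hq
          have hp' : p ∈ S \ T := by
            rw [hsub] at hp; exact (mem_sdiff.mp hp).1
          have hq' : q ∈ S \ T := by
            rw [hsub] at hq; exact (mem_sdiff.mp hq).1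
          exact huni p hp' q hq'
        have hharm := harm_le hk hm
        rw [hcc] at ihE
        linarith
      calc ∑ E ∈ (crossers S).attach, z E.1 * pdhat z (S \ E.1) T
          ≤ ∑ E ∈ (crossers S).attach,
              z E.1 * ((1 + harm m) - (((S \ T) ∩ E.1).card : ℝ) / (m : ℝ)) :=
            Finset.sum_le_sum hstep
        _ = ∑ E ∈ crossers S, z E * ((1 + harm m) - (((S \ T) ∩ E).card : ℝ) / (m : ℝ)) :=
            Finset.sum_attach (crossers S)
              (fun E => z E * ((1 + harm m) - (((S \ T) ∩ E).card : ℝ) / (m : ℝ)))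
    -- combine
    rw [hfL, div_le_iff₀ hW]
    have hLB : L - B = ∑ E ∈ crossers S, z E * ((((S \ T) ∩ E).card : ℝ) / (m : ℝ)) := by
      have h5 : ∑ E ∈ crossers S, z E * ((((S \ T) ∩ E).card : ℝ) / (m : ℝ))
          = (∑ E ∈ crossers S, (((S \ T) ∩ E).card : ℝ) * z E) / (m : ℝ) := by
        rw [Finset.sum_div]
        apply Finset.sum_congr rfl
        intro E _; ring
      rw [h5]
      field_simp
      linarith [hkey]
    have hsum : ∑ E ∈ crossers S, z E * ((1 + harm m) - (((S \ T) ∩ E).card : ℝ) / (m : ℝ))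
        + ∑ E ∈ crossers S, z E * ((((S \ T) ∩ E).card : ℝ) / (m : ℝ))
        = (1 + harm m) * W := by
      rw [← Finset.sum_add_distrib, hWdef, Finset.mul_sum]
      apply Finset.sum_congr rfl
      intro E _; ring
    linarith

/-- the uniform case — if all points of `S ∖ T` have the same norm,
then the pseudo-derivative is at most `1 + H_{|S∖T|}`. -/
theorem stmt9 {α : Type*} [Fintype α] [DecidableEq α]
    (z : Finset α → ℝ) (hz : ∀ E : Finset α, 0 ≤ z E) (hnd : Nondeg z)
    (S T : Finset α) (hS : S.Nonempty) (hT : T.Nonempty)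
    (huni : ∀ p ∈ S \ T, ∀ q ∈ S \ T, ell z p = ell z q) :
    pdhat z S T ≤ 1 + harm (S \ T).card :=
  main_bound z hz hnd T S.card S le_rfl huni
end
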